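/- Let E₄ : y² + xy − αy = x³ − αx² be the Tate normal curve with parameter α ≠ 0 and torsion point P = (0,0) of order 4 over ℚ. Then for all n ≥ 0, the numerator G_n of the x-coordinate of [n]P (with respect to the division polynomial normalization with γ = 1) satisfies: G_n = 0 if n is odd, and G_n = α^{3n²/4} if n is even. -/

import Mathlib

open Polynomial

/-- The Tate normal form `E₄ : y² + xy - αy = x³ - αx²` with parameter `α`. -/
def E4 (α : ℚ) : WeierstrassCurve.Affine ℚ :=
  { a₁ := 1, a₂ := -α, a₃ := -α, a₄ := 0, a₆ := 0 }

/-- The sign of the `n`-th term of the EDS, depending on `n % 8`. -/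
def sgn8 (n : ℕ) : ℚ :=
  match n % 8 with
  | 1 => 1 | 2 => 1 | 3 => -1 | 5 => 1 | 6 => -1 | 7 => -1 | _ => 0

/-- Closed form for `preNormEDS' (α⁴) (-α³) 0 n`. -/
noncomputable def fE (α : ℚ) (n : ℕ) : ℚ := sgn8 n * α ^ (3 * (n ^ 2 / 8))

lemma sgn8_mod (n k : ℕ) (h : n % 8 = k % 8) : sgn8 n = sgn8 k := by
  unfold sgn8; rw [h]

lemma d8 (q K : ℕ) : (8 * q + K) ^ 2 / 8 = 8 * q ^ 2 + 2 * (K * q) + K ^ 2 / 8 := by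
  have h : (8 * q + K) ^ 2 = 8 * (8 * q ^ 2 + 2 * (K * q)) + K ^ 2 := by ring
  omega

lemma fE_eval (α : ℚ) (q K : ℕ) :
    fE α (8 * q + K) = sgn8 K * α ^ (3 * (8 * q ^ 2 + 2 * (K * q) + K ^ 2 / 8)) := by
  unfold fE
  rw [d8, sgn8_mod _ K (by omega)]

lemma fE_zero (α : ℚ) (k : ℕ) (h : k % 4 = 0) : fE α k = 0 := by
  unfold fE sgn8
  have h' : k % 8 = 0 ∨ k % 8 = 4 := by omega
  rcases h' with h' | h' <;> rw [h'] <;> simp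

lemma L1z (q : ℕ) : 2 * (8 * q + 2) + 1 = 8 * (2 * q) + 5 := by ring
lemma L2z (q : ℕ) : 2 * (8 * q + 3) = 8 * (2 * q) + 6 := by ring
lemma L1 (q s : ℕ) : 2 * ((8 * q + s) + 2) + 1 = 8 * (2 * q) + (2 * s + 5) := by ring
lemma L2 (q s : ℕ) : 2 * ((8 * q + s) + 3) = 8 * (2 * q) + (2 * s + 6) := by ring

lemma key (α : ℚ) (n : ℕ) : preNormEDS' (α ^ 4) (-α ^ 3) 0 n = fE α n := by
  induction n using Nat.strong_induction_on with
  | _ n ih =>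
    rcases lt_or_ge n 5 with h5 | h5
    · interval_cases n <;> norm_num [fE, sgn8]
    · rcases Nat.even_or_odd (n - 5) with ⟨m, hm⟩ | ⟨m, hm⟩
      · rw [show n = 2 * (m + 2) + 1 by omega, preNormEDS'_odd,
          ih (m + 1) (by omega), ih (m + 2) (by omega), ih (m + 3) (by omega),
          ih (m + 4) (by omega)]
        obtain ⟨q, r, hr, rfl⟩ : ∃ q r, r < 8 ∧ m = 8 * q + r := ⟨m / 8, m % 8, by omega, by omega⟩
        interval_cases r <;>
        · simp only [L1, L1z, Nat.add_assoc, fE_eval]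
          norm_num [sgn8, parity_simps]
          try ring
      · rw [show n = 2 * (m + 3) by omega, preNormEDS'_even,
          ih (m + 1) (by omega), ih (m + 2) (by omega), ih (m + 3) (by omega),
          ih (m + 4) (by omega), ih (m + 5) (by omega)]
        obtain ⟨q, r, hr, rfl⟩ : ∃ q r, r < 8 ∧ m = 8 * q + r := ⟨m / 8, m % 8, by omega, by omega⟩
        interval_cases r <;>
        · simp only [L2, L2z, Nat.add_assoc, fE_eval]
          norm_num [sgn8, parity_simps]
          try ring

lemma Sval (α : ℚ) (k : ℕ) :
    evalEval 0 0 ((E4 α).ψ (k : ℤ)) = fE α k * (if Even k then -α else 1) := by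
  have h : evalEval 0 0 ((E4 α).ψ (k : ℤ)) =
      normEDS (evalEval 0 0 (E4 α).ψ₂) ((E4 α).Ψ₃.eval 0) ((E4 α).preΨ₄.eval 0) (k : ℤ) := by
    rw [WeierstrassCurve.ψ]
    exact (map_normEDS (evalEvalRingHom (0:ℚ) (0:ℚ)) _ _ _ (k : ℤ)).trans (by simp [evalEval])
  have hb : evalEval 0 0 (E4 α).ψ₂ = -α := by
    simp [WeierstrassCurve.ψ₂, WeierstrassCurve.Affine.polynomialY, E4, evalEval]
  have hc : (E4 α).Ψ₃.eval 0 = -α ^ 3 := by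
    simp [WeierstrassCurve.Ψ₃, E4, WeierstrassCurve.b₂, WeierstrassCurve.b₄,
      WeierstrassCurve.b₆, WeierstrassCurve.b₈]; ring
  have hd : (E4 α).preΨ₄.eval 0 = 0 := by
    simp [WeierstrassCurve.preΨ₄, E4, WeierstrassCurve.b₂, WeierstrassCurve.b₄,
      WeierstrassCurve.b₆, WeierstrassCurve.b₈]; ring
  rw [h, hb, hc, hd, normEDS_ofNat, show (-α) ^ 4 = α ^ 4 by ring, key]

lemma Gval (α : ℚ) (n : ℕ) (hn : 1 ≤ n) :
    evalEval 0 0 ((E4 α).φ (n : ℤ)) =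
      -(evalEval 0 0 ((E4 α).ψ ((n + 1 : ℕ) : ℤ)) *
        evalEval 0 0 ((E4 α).ψ ((n - 1 : ℕ) : ℤ))) := by
  rw [WeierstrassCurve.φ, show ((n:ℕ):ℤ) + 1 = ((n+1 : ℕ) : ℤ) by push_cast; ring,
    show ((n:ℕ):ℤ) - 1 = ((n-1 : ℕ) : ℤ) by omega]
  simp [evalEval]

/-- For the Tate normal curve `E₄` with `α ≠ 0` and torsion point `P = (0, 0)`
of order `4`, the numerator `Gₙ = φₙ(P)` of the `x`-coordinate of `[n]P`
satisfies `Gₙ = 0` if `n` is odd and `Gₙ = α ^ (3n²/4)` if `n` is even. -/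
theorem stmt_12 (α : ℚ) (hα : α ≠ 0) (h : (E4 α).Nonsingular 0 0)
    (horder : addOrderOf (WeierstrassCurve.Affine.Point.some _ _ h) = 4) (n : ℕ) :
    (Odd n → evalEval 0 0 ((E4 α).φ (n : ℤ)) = 0) ∧
    (Even n → evalEval 0 0 ((E4 α).φ (n : ℤ)) = α ^ (3 * n ^ 2 / 4)) := by
  constructor
  · intro hodd
    have hn1 : 1 ≤ n := hodd.pos
    have h2 := Nat.odd_iff.mp hodd
    rw [Gval α n hn1, Sval, Sval]
    have h4 : n % 4 = 1 ∨ n % 4 = 3 := by omega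
    rcases h4 with h4 | h4
    · rw [fE_zero α (n - 1) (by omega)]; ring
    · rw [fE_zero α (n + 1) (by omega)]; ring
  · intro heven
    have h2 := Nat.even_iff.mp heven
    rcases Nat.eq_zero_or_pos n with rfl | hn1
    · simp [WeierstrassCurve.φ_zero, evalEval]
    rw [Gval α n hn1, Sval, Sval,
      if_neg (by simp [Nat.even_add_one, Nat.even_iff]; omega),
      if_neg (by simp [Nat.even_iff]; omega), mul_one, mul_one]
    unfold fE
    obtain ⟨u, rfl⟩ : ∃ u, n = 2 * u + 2 := ⟨(n - 2) / 2, by omega⟩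
    have hs : sgn8 (2 * u + 2 + 1) * sgn8 (2 * u + 2 - 1) = -1 := by
      have h8 : ∀ k : ℕ, sgn8 k = sgn8 (k % 8) := fun k => sgn8_mod k (k % 8) (by omega)
      rw [h8 (2 * u + 2 + 1), h8 (2 * u + 2 - 1)]
      have hm : (2 * u + 2 + 1) % 8 = 3 ∧ (2 * u + 2 - 1) % 8 = 1 ∨
          (2 * u + 2 + 1) % 8 = 5 ∧ (2 * u + 2 - 1) % 8 = 3 ∨
          (2 * u + 2 + 1) % 8 = 7 ∧ (2 * u + 2 - 1) % 8 = 5 ∨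
          (2 * u + 2 + 1) % 8 = 1 ∧ (2 * u + 2 - 1) % 8 = 7 := by omega
      rcases hm with ⟨ha, hb⟩ | ⟨ha, hb⟩ | ⟨ha, hb⟩ | ⟨ha, hb⟩ <;> rw [ha, hb] <;> norm_num [sgn8]
    have he : 3 * ((2 * u + 2 + 1) ^ 2 / 8) + 3 * ((2 * u + 2 - 1) ^ 2 / 8) =
        3 * (2 * u + 2) ^ 2 / 4 := by
      have h1 : (2 * u + 2 + 1) ^ 2 = 4 * u ^ 2 + 12 * u + 9 := by ring
      have h2 : (2 * u + 1) ^ 2 = 4 * u ^ 2 + 4 * u + 1 := by ring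
      have h3 : (2 * u + 2) ^ 2 = 4 * u ^ 2 + 8 * u + 4 := by ring
      have h4 : 2 ∣ u ^ 2 + u := by
        simpa [Nat.mul_succ, sq] using (Nat.even_mul_succ_self u).two_dvd
      rw [show 2 * u + 2 - 1 = 2 * u + 1 by omega]
      omega
    calc -(sgn8 (2 * u + 2 + 1) * α ^ (3 * ((2 * u + 2 + 1) ^ 2 / 8)) *
          (sgn8 (2 * u + 2 - 1) * α ^ (3 * ((2 * u + 2 - 1) ^ 2 / 8))))
        = sgn8 (2 * u + 2 + 1) * sgn8 (2 * u + 2 - 1) *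
          -(α ^ (3 * ((2 * u + 2 + 1) ^ 2 / 8) + 3 * ((2 * u + 2 - 1) ^ 2 / 8))) := by
          rw [pow_add]; ring
      _ = α ^ (3 * (2 * u + 2) ^ 2 / 4) := by rw [hs, he]; ring
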